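/- Under the first-order adaptive control law, if additionally φ ∈ L^∞, then lim_{t→∞} e(t) = 0. -/

import Mathlib

open Matrix Filter

local notation "⟪" x ", " y "⟫" => @inner ℝ _ _ x y

lemma pd_pos' {n : ℕ} {P : Matrix (Fin n) (Fin n) ℝ} (hP : P.PosDef)
    {x : EuclideanSpace ℝ (Fin n)} (hx : x ≠ 0) :
    0 < ⟪x, Matrix.toEuclideanLin P x⟫ := by
  have h := hP.re_dotProduct_pos (x := (WithLp.equiv 2 (Fin n → ℝ)) x)
    (by simpa using hx)
  simpa [EuclideanSpace.inner_eq_star_dotProduct, Matrix.toEuclideanLin_apply, dotProduct_comm] using h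

lemma pd_lower' {n : ℕ} {P : Matrix (Fin n) (Fin n) ℝ} (hP : P.PosDef) :
    ∃ c : ℝ, 0 < c ∧ ∀ x : EuclideanSpace ℝ (Fin n),
      c * ‖x‖ ^ 2 ≤ ⟪x, Matrix.toEuclideanLin P x⟫ := by
  rcases Nat.eq_zero_or_pos n with hn | hn
  · refine ⟨1, one_pos, fun x => ?_⟩
    subst hn
    have hx : x = 0 := Subsingleton.elim x 0
    simp [hx]
  · set S := Metric.sphere (0 : EuclideanSpace ℝ (Fin n)) 1
    have hSne : S.Nonempty := ⟨EuclideanSpace.single ⟨0, hn⟩ 1, by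
      simp [S, EuclideanSpace.norm_single]⟩
    have hcont : Continuous fun x : EuclideanSpace ℝ (Fin n) =>
        ⟪x, Matrix.toEuclideanLin P x⟫ :=
      continuous_id.inner (Matrix.toEuclideanLin P).toContinuousLinearMap.continuous
    obtain ⟨u, huS, humin⟩ := (isCompact_sphere (0 : EuclideanSpace ℝ (Fin n)) 1).exists_isMinOn
      hSne hcont.continuousOn
    have hu0 : u ≠ 0 := by
      intro h; rw [h] at huS; simp [S] at huS
    refine ⟨⟪u, Matrix.toEuclideanLin P u⟫, pd_pos' hP hu0, fun x => ?_⟩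
    rcases eq_or_ne x 0 with rfl | hx
    · simp
    · have hxn : (0:ℝ) < ‖x‖ := norm_pos_iff.2 hx
      set y : EuclideanSpace ℝ (Fin n) := ‖x‖⁻¹ • x
      have hyS : y ∈ S := by
        simp [S, y, norm_smul, abs_of_pos (inv_pos.2 hxn), inv_mul_cancel₀ hxn.ne']
      have hmin := humin hyS
      have hxy : x = ‖x‖ • y := by
        simp [y, smul_smul, mul_inv_cancel₀ hxn.ne']
      have hexp : ⟪x, Matrix.toEuclideanLin P x⟫
          = ‖x‖ ^ 2 * ⟪y, Matrix.toEuclideanLin P y⟫ := by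
        rw [hxy, LinearMap.map_smul, real_inner_smul_left, real_inner_smul_right,
          norm_smul]
        have hy1 : ‖y‖ = 1 := by simpa [S] using hyS
        rw [hy1]
        simp [Real.norm_eq_abs, sq_abs]
        ring
      rw [hexp]
      calc ⟪u, Matrix.toEuclideanLin P u⟫ * ‖x‖ ^ 2
          ≤ ⟪y, Matrix.toEuclideanLin P y⟫ * ‖x‖ ^ 2 := by
            apply mul_le_mul_of_nonneg_right hmin (by positivity)
        _ = ‖x‖ ^ 2 * ⟪y, Matrix.toEuclideanLin P y⟫ := by ring

open intervalIntegral in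
lemma barbalat' (g : ℝ → ℝ) (K C : ℝ) (hK : 0 < K) (hgc : Continuous g)
    (hlip : ∀ s t : ℝ, 0 ≤ s → 0 ≤ t → |g s - g t| ≤ K * |s - t|)
    (hg0 : ∀ t, 0 ≤ g t)
    (hint : ∀ T, 0 ≤ T → (∫ t in (0:ℝ)..T, g t) ≤ C) :
    Tendsto g atTop (nhds 0) := by
  set F : ℝ → ℝ := fun T => ∫ t in (0:ℝ)..T, g t with hF
  have hgi : ∀ a b : ℝ, IntervalIntegrable g MeasureTheory.volume a b :=
    fun a b => hgc.intervalIntegrable a b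
  have hFadd : ∀ a b : ℝ, F b - F a = ∫ t in a..b, g t := by
    intro a b
    have := integral_add_adjacent_intervals (hgi 0 a) (hgi a b)
    simp only [hF]; linarith [this]
  have hFmono : Monotone F := by
    intro a b hab
    have h1 : (0:ℝ) ≤ ∫ t in a..b, g t :=
      integral_nonneg hab (fun x _ => hg0 x)
    have := hFadd a b; linarith
  have hFbdd : BddAbove (Set.range F) := by
    refine ⟨max C (F 0), ?_⟩
    rintro _ ⟨T, rfl⟩
    rcases le_or_gt 0 T with hT | hT
    · exact le_max_of_le_left (hint T hT)
    · exact le_max_of_le_right (hFmono hT.le)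
  have hFtend : Tendsto F atTop (nhds (⨆ T, F T)) := tendsto_atTop_ciSup hFmono hFbdd
  by_contra hcon
  rw [Metric.tendsto_atTop] at hcon
  push_neg at hcon
  obtain ⟨ε, hε, hfr⟩ := hcon
  set δ : ℝ := ε / (2 * K) with hδ
  have hδpos : 0 < δ := by positivity
  have hshift : Tendsto (fun T => F (T + δ)) atTop (nhds (⨆ T, F T)) :=
    hFtend.comp (tendsto_atTop_add_const_right _ δ tendsto_id)
  have hdiff : Tendsto (fun T => F (T + δ) - F T) atTop (nhds 0) := by
    simpa using hshift.sub hFtend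
  have hev : ∀ᶠ T in atTop, F (T + δ) - F T < δ * ε / 2 := by
    have hpos : (0:ℝ) < δ * ε / 2 := by positivity
    exact hdiff.eventually_lt_const hpos
  have hev2 : ∀ᶠ T in (atTop : Filter ℝ), (0:ℝ) ≤ T := eventually_ge_atTop 0
  obtain ⟨N, hN⟩ := (hev.and hev2).exists_forall_of_atTop
  obtain ⟨t, htN, htg⟩ := hfr (max N 0)
  have ht0 : (0:ℝ) ≤ t := le_trans (le_max_right N 0) htN
  have htg' : ε ≤ g t := by
    have hd : dist (g t) 0 = g t := by
      rw [Real.dist_eq, sub_zero, abs_of_nonneg (hg0 t)]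
    linarith [htg, hd.le, hd.ge]
  have hFlt : F (t + δ) - F t < δ * ε / 2 :=
    (hN t (le_trans (le_max_left N 0) htN)).1
  have hlb : ∀ s ∈ Set.Icc t (t + δ), ε / 2 ≤ g s := by
    intro s hs
    have hs0 : 0 ≤ s := le_trans ht0 hs.1
    have habs : |s - t| ≤ δ := by
      rw [abs_of_nonneg (by linarith [hs.1])]
      linarith [hs.2]
    have h1 : |g s - g t| ≤ K * δ := le_trans (hlip s t hs0 ht0)
      (mul_le_mul_of_nonneg_left habs hK.le)
    have hKδ : K * δ = ε / 2 := by
      rw [hδ]; field_simp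
    have h2 := abs_le.1 h1
    linarith [h2.1]
  have hge : δ * (ε / 2) ≤ ∫ s in t..(t + δ), g s := by
    have h1 : (∫ s in t..(t + δ), (ε/2 : ℝ)) ≤ ∫ s in t..(t + δ), g s := by
      apply integral_mono_on (by linarith) intervalIntegrable_const (hgi t (t+δ))
      exact fun x hx => hlb x hx
    rw [integral_const] at h1
    simpa [smul_eq_mul] using h1
  have hadd := hFadd t (t + δ)
  linarith

lemma adjoint_eq' {n : ℕ} (A : Matrix (Fin n) (Fin n) ℝ) (x y : EuclideanSpace ℝ (Fin n)) :
    ⟪Matrix.toEuclideanLin A x, y⟫ = ⟪x, Matrix.toEuclideanLin Aᵀ y⟫ := by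
  have h : Aᵀ = Aᴴ := by ext i j; simp [Matrix.conjTranspose_apply]
  rw [h, Matrix.toEuclideanLin_conjTranspose_eq_adjoint, LinearMap.adjoint_inner_right]

lemma mul_apply' {n : ℕ} (M₁ M₂ : Matrix (Fin n) (Fin n) ℝ) (x : EuclideanSpace ℝ (Fin n)) :
    Matrix.toEuclideanLin (M₁ * M₂) x
      = Matrix.toEuclideanLin M₁ (Matrix.toEuclideanLin M₂ x) := by
  simp [Matrix.toEuclideanLin_apply, Matrix.mulVec_mulVec]

lemma deriv_algebra' {n N : ℕ} {γ : ℝ} (hγ : γ ≠ 0)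
    (A P Q : Matrix (Fin n) (Fin n) ℝ)
    (hLyap : Aᵀ * P + P * A = -Q) (hPH : Pᵀ = P)
    (b x : EuclideanSpace ℝ (Fin n)) (u v : EuclideanSpace ℝ (Fin N)) :
    (⟪x, Matrix.toEuclideanLin P (Matrix.toEuclideanLin A x + ⟪u, v⟫ • b)⟫
      + ⟪Matrix.toEuclideanLin A x + ⟪u, v⟫ • b, Matrix.toEuclideanLin P x⟫)
    + γ⁻¹ * (⟪u, (-γ * ⟪x, Matrix.toEuclideanLin P b⟫) • v⟫
      + ⟪(-γ * ⟪x, Matrix.toEuclideanLin P b⟫) • v, u⟫)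
    = -⟪x, Matrix.toEuclideanLin Q x⟫ := by
  have key : ⟪x, Matrix.toEuclideanLin P (Matrix.toEuclideanLin A x)⟫
      + ⟪Matrix.toEuclideanLin A x, Matrix.toEuclideanLin P x⟫
      = -⟪x, Matrix.toEuclideanLin Q x⟫ := by
    rw [adjoint_eq' A x, ← mul_apply' P A, ← mul_apply' Aᵀ P, ← inner_add_right]
    have : Matrix.toEuclideanLin (P * A) x + Matrix.toEuclideanLin (Aᵀ * P) x
        = Matrix.toEuclideanLin (Aᵀ * P + P * A) x := by
      rw [map_add]; exact (add_comm _ _)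
    rw [this, hLyap, map_neg]
    simp
  have hsym : ⟪b, Matrix.toEuclideanLin P x⟫ = ⟪x, Matrix.toEuclideanLin P b⟫ := by
    have h := adjoint_eq' P b x
    rw [hPH] at h
    rw [← h, real_inner_comm]
  rw [map_add, inner_add_right, inner_add_left, LinearMap.map_smul,
    real_inner_smul_right, real_inner_smul_left, real_inner_smul_right,
    real_inner_smul_left, hsym, real_inner_comm v u]
  rw [← key]
  field_simp
  ring

/-- First-order adaptive control law: if additionally `φ ∈ L^∞`, then the tracking
error satisfies `e(t) → 0` as `t → ∞`. -/
theorem stmt_7 {n N : ℕ} (γ : ℝ) (hγ : 0 < γ)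
    (A P Q : Matrix (Fin n) (Fin n) ℝ) (hP : P.PosDef) (hQ : Q.PosDef)
    (hLyap : Aᵀ * P + P * A = -Q)
    (b : EuclideanSpace ℝ (Fin n))
    (φ : ℝ → EuclideanSpace ℝ (Fin N)) (hφ : Continuous φ)
    (hφ_bdd : ∃ M : ℝ, ∀ t : ℝ, ‖φ t‖ ≤ M)
    (θstar : EuclideanSpace ℝ (Fin N))
    (e : ℝ → EuclideanSpace ℝ (Fin n)) (θ : ℝ → EuclideanSpace ℝ (Fin N))
    (he : ∀ t : ℝ, HasDerivAt e
      (Matrix.toEuclideanLin A (e t) + ⟪θ t - θstar, φ t⟫ • b) t)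
    (hθ : ∀ t : ℝ, HasDerivAt θ
      ((-γ * ⟪e t, Matrix.toEuclideanLin P b⟫) • φ t) t) :
    Tendsto e atTop (nhds (0 : EuclideanSpace ℝ (Fin n))) := by
  classical
  obtain ⟨cP, hcP, hPlow⟩ := pd_lower' hP
  obtain ⟨cQ, hcQ, hQlow⟩ := pd_lower' hQ
  obtain ⟨M, hM⟩ := hφ_bdd
  have hM0 : (0:ℝ) ≤ M := le_trans (norm_nonneg _) (hM 0)
  have hPH : Pᵀ = P := by
    have := hP.1
    rwa [Matrix.IsHermitian, show Pᴴ = Pᵀ by ext i j; simp [Matrix.conjTranspose_apply]] at this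
  set e' : ℝ → EuclideanSpace ℝ (Fin n) :=
    fun t => Matrix.toEuclideanLin A (e t) + ⟪θ t - θstar, φ t⟫ • b with he'def
  set θ' : ℝ → EuclideanSpace ℝ (Fin N) :=
    fun t => (-γ * ⟪e t, Matrix.toEuclideanLin P b⟫) • φ t with hθ'def
  set V : ℝ → ℝ := fun t => ⟪e t, Matrix.toEuclideanLin P (e t)⟫
      + γ⁻¹ * ⟪θ t - θstar, θ t - θstar⟫ with hVdef
  -- derivative of V
  have hVderiv : ∀ t, HasDerivAt V (-⟪e t, Matrix.toEuclideanLin Q (e t)⟫) t := by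
    intro t
    have hPe : HasDerivAt (fun s => Matrix.toEuclideanLin P (e s))
        (Matrix.toEuclideanLin P (e' t)) t :=
      (Matrix.toEuclideanLin P).toContinuousLinearMap.hasFDerivAt.comp_hasDerivAt t (he t)
    have h1 : HasDerivAt (fun s => ⟪e s, Matrix.toEuclideanLin P (e s)⟫)
        (⟪e t, Matrix.toEuclideanLin P (e' t)⟫ + ⟪e' t, Matrix.toEuclideanLin P (e t)⟫) t :=
      HasDerivAt.inner ℝ (he t) hPe
    have hθt : HasDerivAt (fun s => θ s - θstar) (θ' t) t := (hθ t).sub_const θstar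
    have h2 : HasDerivAt (fun s => ⟪θ s - θstar, θ s - θstar⟫)
        (⟪θ t - θstar, θ' t⟫ + ⟪θ' t, θ t - θstar⟫) t :=
      HasDerivAt.inner ℝ hθt hθt
    have h3 := h1.add (h2.const_mul γ⁻¹)
    refine h3.congr_deriv ?_
    have := deriv_algebra' hγ.ne' A P Q hLyap hPH b (e t) (θ t - θstar) (φ t)
    rw [← this]
  have hediff : Differentiable ℝ e := fun t => (he t).differentiableAt
  have hecont : Continuous e := hediff.continuous
  have hQe_cont : Continuous fun t => ⟪e t, Matrix.toEuclideanLin Q (e t)⟫ :=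
    hecont.inner ((Matrix.toEuclideanLin Q).toContinuousLinearMap.continuous.comp hecont)
  have hVdiff : Differentiable ℝ V := fun t => (hVderiv t).differentiableAt
  have hQe_nonneg : ∀ t, 0 ≤ ⟪e t, Matrix.toEuclideanLin Q (e t)⟫ :=
    fun t => le_trans (by positivity) (hQlow (e t))
  have hVanti : Antitone V := by
    apply antitone_of_deriv_nonpos hVdiff
    intro t
    rw [(hVderiv t).deriv]
    linarith [hQe_nonneg t]
  have hVnonneg : ∀ t, 0 ≤ V t := fun t =>
    add_nonneg (le_trans (by positivity) (hPlow (e t)))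
      (mul_nonneg (inv_nonneg.2 hγ.le) real_inner_self_nonneg)
  have hFTC : ∀ T : ℝ, (∫ t in (0:ℝ)..T, ⟪e t, Matrix.toEuclideanLin Q (e t)⟫)
      = V 0 - V T := by
    intro T
    have h := intervalIntegral.integral_eq_sub_of_hasDerivAt
      (f := V) (f' := fun t => -⟪e t, Matrix.toEuclideanLin Q (e t)⟫)
      (fun t _ => hVderiv t) ((hQe_cont.neg).intervalIntegrable 0 T)
    rw [intervalIntegral.integral_neg] at h
    linarith
  -- bounds for t ≥ 0
  have hVle : ∀ t : ℝ, 0 ≤ t → V t ≤ V 0 := fun t ht => hVanti ht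
  have hebound : ∀ t : ℝ, 0 ≤ t → ‖e t‖ ^ 2 ≤ V 0 / cP := by
    intro t ht
    have h1 := hPlow (e t)
    have h2 : ⟪e t, Matrix.toEuclideanLin P (e t)⟫ ≤ V t := by
      have : (0:ℝ) ≤ γ⁻¹ * ⟪θ t - θstar, θ t - θstar⟫ :=
        mul_nonneg (inv_nonneg.2 hγ.le) real_inner_self_nonneg
      simp only [hVdef]; linarith
    rw [le_div_iff₀ hcP, mul_comm]
    linarith [hVle t ht]
  set Be : ℝ := Real.sqrt (V 0 / cP) with hBe
  have heB : ∀ t : ℝ, 0 ≤ t → ‖e t‖ ≤ Be := by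
    intro t ht
    have := Real.sqrt_le_sqrt (hebound t ht)
    rwa [Real.sqrt_sq (norm_nonneg _)] at this
  have hBe0 : 0 ≤ Be := Real.sqrt_nonneg _
  set Bθ : ℝ := Real.sqrt (γ * V 0) with hBθ
  have hθB : ∀ t : ℝ, 0 ≤ t → ‖θ t - θstar‖ ≤ Bθ := by
    intro t ht
    have h2 : γ⁻¹ * ⟪θ t - θstar, θ t - θstar⟫ ≤ V t := by
      have : (0:ℝ) ≤ ⟪e t, Matrix.toEuclideanLin P (e t)⟫ :=
        le_trans (by positivity) (hPlow (e t))
      simp only [hVdef]; linarith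
    have h3 : ‖θ t - θstar‖ ^ 2 ≤ γ * V 0 := by
      rw [← real_inner_self_eq_norm_sq]
      have h4 : γ⁻¹ * ⟪θ t - θstar, θ t - θstar⟫ ≤ V 0 := le_trans h2 (hVle t ht)
      calc ⟪θ t - θstar, θ t - θstar⟫
          = γ * (γ⁻¹ * ⟪θ t - θstar, θ t - θstar⟫) := by
            field_simp
        _ ≤ γ * V 0 := mul_le_mul_of_nonneg_left h4 hγ.le
    have := Real.sqrt_le_sqrt h3
    rwa [Real.sqrt_sq (norm_nonneg _)] at this
  have hBθ0 : 0 ≤ Bθ := Real.sqrt_nonneg _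
  set LA := (Matrix.toEuclideanLin A).toContinuousLinearMap with hLA
  set Ke : ℝ := ‖LA‖ * Be + Bθ * M * ‖b‖ with hKe
  have hKe0 : 0 ≤ Ke := by positivity
  have he'B : ∀ t : ℝ, 0 ≤ t → ‖e' t‖ ≤ Ke := by
    intro t ht
    have h1 : ‖e' t‖ ≤ ‖Matrix.toEuclideanLin A (e t)‖ + ‖⟪θ t - θstar, φ t⟫ • b‖ :=
      norm_add_le _ _
    have h2 : ‖Matrix.toEuclideanLin A (e t)‖ ≤ ‖LA‖ * Be := by
      have : Matrix.toEuclideanLin A (e t) = LA (e t) := rfl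
      rw [this]
      exact le_trans (LA.le_opNorm _) (mul_le_mul_of_nonneg_left (heB t ht) (norm_nonneg _))
    have h3 : ‖⟪θ t - θstar, φ t⟫ • b‖ ≤ Bθ * M * ‖b‖ := by
      rw [norm_smul, Real.norm_eq_abs]
      apply mul_le_mul_of_nonneg_right _ (norm_nonneg b)
      calc |⟪θ t - θstar, φ t⟫| ≤ ‖θ t - θstar‖ * ‖φ t‖ := abs_real_inner_le_norm _ _
        _ ≤ Bθ * M := mul_le_mul (hθB t ht) (hM t) (norm_nonneg _) hBθ0
    simp only [hKe]
    linarith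
  -- the function g
  set g : ℝ → ℝ := fun t => ⟪e t, e t⟫ with hgdef
  have hgnorm : ∀ t, g t = ‖e t‖ ^ 2 := fun t => real_inner_self_eq_norm_sq _
  have hgc : Continuous g := hecont.inner hecont
  have hg0 : ∀ t, 0 ≤ g t := fun t => real_inner_self_nonneg
  have hgderiv : ∀ t, HasDerivAt g (⟪e t, e' t⟫ + ⟪e' t, e t⟫) t :=
    fun t => HasDerivAt.inner ℝ (he t) (he t)
  set K : ℝ := max (2 * Be * Ke) 1 with hK
  have hK0 : (0:ℝ) < K := lt_of_lt_of_le one_pos (le_max_right _ _)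
  have hgbound : ∀ x ∈ Set.Ici (0:ℝ), ‖⟪e x, e' x⟫ + ⟪e' x, e x⟫‖ ≤ K := by
    intro x hx
    have hx0 : (0:ℝ) ≤ x := hx
    have h1 : |⟪e x, e' x⟫| ≤ Be * Ke :=
      le_trans (abs_real_inner_le_norm _ _)
        (mul_le_mul (heB x hx0) (he'B x hx0) (norm_nonneg _) hBe0)
    have h2 : |⟪e' x, e x⟫| ≤ Be * Ke := by
      rw [real_inner_comm]; exact h1
    have h3 : ‖⟪e x, e' x⟫ + ⟪e' x, e x⟫‖ ≤ 2 * Be * Ke := by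
      rw [Real.norm_eq_abs]
      calc |⟪e x, e' x⟫ + ⟪e' x, e x⟫| ≤ |⟪e x, e' x⟫| + |⟪e' x, e x⟫| := abs_add_le _ _
        _ ≤ 2 * Be * Ke := by linarith
    exact le_trans h3 (le_max_left _ _)
  have hlip : ∀ s t : ℝ, 0 ≤ s → 0 ≤ t → |g s - g t| ≤ K * |s - t| := by
    intro s t hs ht
    have h := Convex.norm_image_sub_le_of_norm_hasDerivWithin_le
      (f := g) (f' := fun x => ⟪e x, e' x⟫ + ⟪e' x, e x⟫) (s := Set.Ici (0:ℝ))
      (fun x _ => (hgderiv x).hasDerivWithinAt) hgbound (convex_Ici 0) ht hs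
    simpa [Real.norm_eq_abs] using h
  -- integral bound
  set C : ℝ := V 0 / cQ with hC
  have hint : ∀ T : ℝ, 0 ≤ T → (∫ t in (0:ℝ)..T, g t) ≤ C := by
    intro T hT
    have h1 : (∫ t in (0:ℝ)..T, cQ * g t)
        ≤ ∫ t in (0:ℝ)..T, ⟪e t, Matrix.toEuclideanLin Q (e t)⟫ := by
      apply intervalIntegral.integral_mono_on hT
        ((hgc.const_smul cQ).intervalIntegrable 0 T) (hQe_cont.intervalIntegrable 0 T)
      intro x _
      rw [Pi.smul_apply, smul_eq_mul, hgnorm x]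
      exact hQlow (e x)
    rw [intervalIntegral.integral_const_mul] at h1
    have h2 : (∫ t in (0:ℝ)..T, ⟪e t, Matrix.toEuclideanLin Q (e t)⟫) ≤ V 0 := by
      rw [hFTC T]
      linarith [hVnonneg T]
    rw [hC, le_div_iff₀ hcQ, mul_comm]
    linarith
  have hgt : Tendsto g atTop (nhds 0) := barbalat' g K C hK0 hgc hlip hg0 hint
  rw [tendsto_zero_iff_norm_tendsto_zero]
  have hsq : Tendsto (fun t => Real.sqrt (g t)) atTop (nhds (Real.sqrt 0)) :=
    (Real.continuous_sqrt.tendsto 0).comp hgt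
  have heq : (fun t => Real.sqrt (g t)) = fun t => ‖e t‖ := by
    funext t
    rw [hgnorm t, Real.sqrt_sq (norm_nonneg _)]
  rw [heq] at hsq
  simpa using hsq
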